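/- Define f : [n] × A^[m] → Z/sZ by f(i, a) = Σ_{F ⊆ [n], |F| = h, i ∈ F} a^{(g(F))}_{z(F,i)} mod s, where z(F,i) = |{j ∈ F : j ≤ i}|. Fix an h-subset F = {i_1 < ... < i_h} and let p = g(F). Then for every a and every b = (b_1,...,b_h) ∈ A: (1) f(i, a(p, b)) = f(i, a) for all i ∉ F; (2) f(i_u, a(p, b)) = f(i_u, a(p, 0)) + b_u mod s for all u ∈ [h], where a(p,b) denotes a with its p-th block replaced by b. -/

import Mathlib

theorem stmt12 (n h s : ℕ) (hh : 1 ≤ h) (hhn : h ≤ n) (hs : 2 ≤ s)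
    (m : ℕ) (hm : m = Nat.choose n h)
    (g : Finset ℕ → ℕ)
    (hg : Set.BijOn g {T : Finset ℕ | T ⊆ Finset.Icc 1 n ∧ T.card = h} (Set.Icc 1 m))
    (a : ℕ → ℕ → Fin s)
    (ha : ∀ p ∈ Finset.Icc 1 m,
      ((Finset.Icc 1 h).filter (fun j => (a p j : ℕ) = s - 1)).card ≤ 1)
    (b : ℕ → Fin s)
    (hb : ((Finset.Icc 1 h).filter (fun j => (b j : ℕ) = s - 1)).card ≤ 1)
    (f : ℕ → (ℕ → ℕ → Fin s) → ZMod s)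
    (hf : ∀ i c, f i c =
      ∑ T ∈ ((Finset.Icc 1 n).powersetCard h).filter (fun T => i ∈ T),
        ((c (g T) ((T.filter (fun j => j ≤ i)).card) : ℕ) : ZMod s))
    (F0 : Finset ℕ) (hF0 : F0 ⊆ Finset.Icc 1 n) (hF0card : F0.card = h)
    (p : ℕ) (hp : p = g F0)
    (zero : ℕ → Fin s) (hzero : ∀ j, (zero j : ℕ) = 0) :
    (∀ i ∈ Finset.Icc 1 n, i ∉ F0 →
        f i (Function.update a p b) = f i a) ∧
    (∀ i ∈ F0,
        f i (Function.update a p b) =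
          f i (Function.update a p zero)
            + ((b ((F0.filter (fun j => j ≤ i)).card) : ℕ) : ZMod s)) := by
  have key : ∀ T : Finset ℕ, T ⊆ Finset.Icc 1 n → T.card = h → g T = p → T = F0 := by
    intro T hT1 hT2 hgt
    exact hg.injOn ⟨hT1, hT2⟩ ⟨hF0, hF0card⟩ (by rw [hgt, hp])
  constructor
  · intro i hi hiF
    rw [hf, hf]
    refine Finset.sum_congr rfl fun T hT => ?_
    simp only [Finset.mem_filter, Finset.mem_powersetCard] at hT
    have hne : g T ≠ p := fun hgt => hiF (key T hT.1.1 hT.1.2 hgt ▸ hT.2)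
    rw [Function.update_of_ne hne]
  · intro i hiF
    rw [hf, hf]
    have hF0mem : F0 ∈ ((Finset.Icc 1 n).powersetCard h).filter (fun T => i ∈ T) := by
      simp [Finset.mem_powersetCard, hF0, hF0card, hiF]
    rw [← Finset.sum_erase_add _ _ hF0mem, ← Finset.sum_erase_add _ _ hF0mem]
    have hrest : ∀ T ∈ (((Finset.Icc 1 n).powersetCard h).filter (fun T => i ∈ T)).erase F0,
        ((Function.update a p b (g T) ((T.filter (fun j => j ≤ i)).card) : ℕ) : ZMod s)
          = ((Function.update a p zero (g T) ((T.filter (fun j => j ≤ i)).card) : ℕ) : ZMod s) := by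
      intro T hT
      have hT' := Finset.mem_of_mem_erase hT
      simp only [Finset.mem_filter, Finset.mem_powersetCard] at hT'
      have hne : g T ≠ p := fun hgt =>
        Finset.ne_of_mem_erase hT (key T hT'.1.1 hT'.1.2 hgt)
      rw [Function.update_of_ne hne, Function.update_of_ne hne]
    rw [Finset.sum_congr rfl hrest, add_assoc]
    congr 1
    rw [← hp, Function.update_self, Function.update_self, hzero]
    simp
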